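/- If both the lengths of maximal 0-blocks and of maximal 1-blocks of strings α and β over {0,1} are uniformly bounded, then α and β are quasi-isometric to each other; in particular both are quasi-isometric to (01)^ω. -/
import Mathlib


def IsQI {Γ : Type*} (α β : ℕ → Γ) (f : ℕ → ℕ) (A B : ℝ) : Prop :=
  1 ≤ A ∧ 0 ≤ B ∧ (∀ n, α n = β (f n)) ∧
  (∀ x y : ℕ, (1 / A) * |(x : ℝ) - (y : ℝ)| - B ≤ |(f x : ℝ) - (f y : ℝ)| ∧
      |(f x : ℝ) - (f y : ℝ)| ≤ A * |(x : ℝ) - (y : ℝ)| + B) ∧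
  (∀ m : ℕ, ∃ x : ℕ, |(m : ℝ) - (f x : ℝ)| ≤ A)

/-- `α ≤_QI β`: there is a quasi-isometry from `α` to `β`. -/
def QI {Γ : Type*} (α β : ℕ → Γ) : Prop := ∃ f A B, IsQI α β f A B

lemma key_qi (α β : ℕ → Fin 2) (K : ℕ)
    (hβ : ∀ n, ∃ j ≤ K, β (n + j) ≠ β n) : QI α β := by
  have hmatch : ∀ n, ∃ j, j ≤ K ∧ β (n + j) = α n := by
    intro n
    by_cases h : β n = α n
    · exact ⟨0, Nat.zero_le K, by simpa using h⟩
    · obtain ⟨j, hj, hne⟩ := hβ n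
      refine ⟨j, hj, ?_⟩
      have key : ∀ a b c : Fin 2, a ≠ b → b ≠ c → a = c := by decide
      exact key _ _ _ hne h
  choose j hjK hjeq using hmatch
  refine ⟨fun n => n + j n, K + 1, K, ?_, by positivity, fun n => (hjeq n).symm, ?_, ?_⟩
  · have : (0:ℝ) ≤ K := by positivity
    linarith
  · intro x y
    have hx : (j x : ℝ) ≤ K := by exact_mod_cast hjK x
    have hy : (j y : ℝ) ≤ K := by exact_mod_cast hjK y
    have hx0 : (0:ℝ) ≤ j x := by positivity
    have hy0 : (0:ℝ) ≤ j y := by positivity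
    have hd : |(j x : ℝ) - j y| ≤ K := by
      rw [abs_sub_le_iff]; constructor <;> linarith
    have heq : (↑(x + j x) : ℝ) - ↑(y + j y) = ((x:ℝ) - y) + ((j x:ℝ) - j y) := by
      push_cast; ring
    have hub : |(↑(x + j x) : ℝ) - ↑(y + j y)| ≤ |(x:ℝ) - y| + K := by
      rw [heq]
      calc |((x:ℝ) - y) + ((j x:ℝ) - j y)| ≤ |(x:ℝ) - y| + |(j x:ℝ) - j y| := abs_add_le _ _
        _ ≤ |(x:ℝ) - y| + K := by linarith
    have hlb : |(x:ℝ) - y| - K ≤ |(↑(x + j x) : ℝ) - ↑(y + j y)| := by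
      have : |(x:ℝ) - y| ≤ |(↑(x + j x) : ℝ) - ↑(y + j y)| + |(j x:ℝ) - j y| := by
        have h2 : ((x:ℝ) - y) = ((↑(x + j x) : ℝ) - ↑(y + j y)) - ((j x:ℝ) - j y) := by
          push_cast; ring
        rw [h2]
        exact abs_sub _ _
      linarith
    have hA1 : (1:ℝ) ≤ (K:ℝ) + 1 := by have : (0:ℝ) ≤ K := Nat.cast_nonneg K; linarith
    have hdiv : 1 / ((K:ℝ) + 1) * |(x:ℝ) - y| ≤ |(x:ℝ) - y| := by
      have h01 : 1 / ((K:ℝ) + 1) ≤ 1 := by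
        rw [div_le_one (by positivity)]; linarith
      nlinarith [abs_nonneg ((x:ℝ) - y)]
    constructor
    · linarith
    · nlinarith [abs_nonneg ((x:ℝ) - y)]
  · intro m
    refine ⟨m, ?_⟩
    have : ((m:ℝ)) - ↑(m + j m) = -(j m) := by push_cast; ring
    rw [this, abs_neg, abs_of_nonneg (by positivity)]
    have : (j m : ℝ) ≤ K := by exact_mod_cast hjK m
    linarith

lemma flips (γ : ℕ → Fin 2) (K : ℕ)
    (hγ : ∀ i len : ℕ, (∀ j < len, γ (i + j) = γ i) → len ≤ K) :
    ∀ n, ∃ j ≤ K, γ (n + j) ≠ γ n := by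
  intro n
  by_contra h
  push_neg at h
  have := hγ n (K + 1) (fun j hj => h j (Nat.lt_succ_iff.mp hj))
  omega

lemma flips_per (K : ℕ) (hK : 1 ≤ K) :
    ∀ n, ∃ j ≤ K, (fun i => if i % 2 = 0 then (0 : Fin 2) else 1) (n + j)
      ≠ (fun i => if i % 2 = 0 then (0 : Fin 2) else 1) n := by
  intro n
  refine ⟨1, hK, ?_⟩
  simp only
  rcases Nat.even_or_odd n with he | ho
  · have h1 : n % 2 = 0 := Nat.even_iff.mp he
    have h2 : (n + 1) % 2 = 1 := by omega
    simp [h1, h2]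
  · have h1 : n % 2 = 1 := Nat.odd_iff.mp ho
    have h2 : (n + 1) % 2 = 0 := by omega
    simp [h1, h2]

/-- If both the maximal `0`-blocks and the maximal `1`-blocks of `α` and `β` have
lengths uniformly bounded by `K` (i.e. every run of a constant colour has length at
most `K`), then `α` and `β` are quasi-isometric to each other, and both are
quasi-isometric to `(01)^ω`. -/
theorem bounded_blocks_QI (α β : ℕ → Fin 2) (K : ℕ)
    (hα : ∀ i len : ℕ, (∀ j < len, α (i + j) = α i) → len ≤ K)
    (hβ : ∀ i len : ℕ, (∀ j < len, β (i + j) = β i) → len ≤ K) :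
    QI α β ∧ QI β α ∧
    QI α (fun i => if i % 2 = 0 then (0 : Fin 2) else 1) ∧
    QI (fun i => if i % 2 = 0 then (0 : Fin 2) else 1) α ∧
    QI β (fun i => if i % 2 = 0 then (0 : Fin 2) else 1) ∧
    QI (fun i => if i % 2 = 0 then (0 : Fin 2) else 1) β := by
  have hK : 1 ≤ K := hα 0 1 (fun j hj => by interval_cases j; rfl)
  have fα := flips α K hα
  have fβ := flips β K hβ
  have fp := flips_per K hK
  exact ⟨key_qi _ _ K fβ, key_qi _ _ K fα, key_qi _ _ K fp, key_qi _ _ K fα,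
    key_qi _ _ K fp, key_qi _ _ K fβ⟩
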